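/- Every continuous bilinear map β : E₁ × E₂ → F from a product of normed spaces into a locally convex space admits product estimates. -/

import Mathlib

/-- A bilinear map (given as a function) `β : E₁ × E₂ → F` *admits product estimates*
if for every double sequence `(p i j)` of continuous seminorms on `F` there exist
sequences `(P i)`, `(Q j)` of continuous seminorms on `E₁`, `E₂` with
`p i j (β x y) ≤ P i x * Q j y` for all `i, j, x, y`. -/
def ProductEstimates {E₁ E₂ F : Type*}
    [AddCommGroup E₁] [Module ℝ E₁] [TopologicalSpace E₁]
    [AddCommGroup E₂] [Module ℝ E₂] [TopologicalSpace E₂]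
    [AddCommGroup F] [Module ℝ F] [TopologicalSpace F]
    (β : E₁ → E₂ → F) : Prop :=
  ∀ p : ℕ → ℕ → Seminorm ℝ F, (∀ i j, Continuous (p i j)) →
    ∃ (P : ℕ → Seminorm ℝ E₁) (Q : ℕ → Seminorm ℝ E₂),
      (∀ i, Continuous (P i)) ∧ (∀ j, Continuous (Q j)) ∧
      ∀ (i j : ℕ) (x : E₁) (y : E₂), p i j (β x y) ≤ P i x * Q j y

lemma bilin_seminorm_bound {E₁ E₂ F : Type*}
    [NormedAddCommGroup E₁] [NormedSpace ℝ E₁]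
    [NormedAddCommGroup E₂] [NormedSpace ℝ E₂]
    [AddCommGroup F] [Module ℝ F] [TopologicalSpace F]
    (β : E₁ →ₗ[ℝ] E₂ →ₗ[ℝ] F)
    (hβ : Continuous (fun xy : E₁ × E₂ => β xy.1 xy.2))
    (q : Seminorm ℝ F) (hq : Continuous q) :
    ∃ C : ℝ, 0 ≤ C ∧ ∀ x y, q (β x y) ≤ C * ‖x‖ * ‖y‖ := by
  have hc : Continuous (fun xy : E₁ × E₂ => q (β xy.1 xy.2)) := hq.comp hβ
  have h0 : q (β (0 : E₁) 0) = 0 := by simp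
  have hmem : {xy : E₁ × E₂ | q (β xy.1 xy.2) < 1} ∈ nhds ((0 : E₁), (0 : E₂)) :=
    (isOpen_lt hc continuous_const).mem_nhds (by simp [h0])
  rw [Metric.mem_nhds_iff] at hmem
  obtain ⟨ε, hε, hball'⟩ := hmem
  have hball : ∀ z : E₁ × E₂, dist z (0,0) < ε → q (β z.1 z.2) < 1 := by
    intro z hz
    have : z ∈ Metric.ball ((0:E₁),(0:E₂)) ε := by simpa [Metric.mem_ball] using hz
    exact hball' this
  refine ⟨4 / ε ^ 2, by positivity, fun x y => ?_⟩
  rcases eq_or_ne x 0 with rfl | hx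
  · simp
  rcases eq_or_ne y 0 with rfl | hy
  · simp
  have hxn : (0:ℝ) < ‖x‖ := norm_pos_iff.mpr hx
  have hyn : (0:ℝ) < ‖y‖ := norm_pos_iff.mpr hy
  set r := ε / 2 with hr
  have hrpos : 0 < r := by positivity
  set x' := (r / ‖x‖) • x with hx'
  set y' := (r / ‖y‖) • y with hy'
  have hkey : q (β x' y') < 1 := by
    apply hball (x', y')
    have hx'n : ‖x'‖ = r := by
      rw [hx', norm_smul, Real.norm_of_nonneg (by positivity)]
      field_simp
    have hy'n : ‖y'‖ = r := by
      rw [hy', norm_smul, Real.norm_of_nonneg (by positivity)]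
      field_simp
    rw [Prod.dist_eq]
    simp only [dist_zero_right, hx'n, hy'n, max_self]
    rw [hr]; linarith
  have hexp : β x' y' = ((r / ‖x‖) * (r / ‖y‖)) • β x y := by
    simp [hx', hy', map_smul, LinearMap.smul_apply, smul_smul, mul_comm]
  rw [hexp, map_smul_eq_mul, Real.norm_of_nonneg (by positivity)] at hkey
  rw [div_mul_div_comm, div_mul_eq_mul_div, div_lt_one (by positivity)] at hkey
  have : q (β x y) ≤ (‖x‖ * ‖y‖) / (r * r) := by
    rw [le_div_iff₀ (by positivity)]
    nlinarith [hkey]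
  calc q (β x y) ≤ (‖x‖ * ‖y‖) / (r * r) := this
    _ = 4 / ε ^ 2 * ‖x‖ * ‖y‖ := by rw [hr]; field_simp; ring

theorem productEstimates_of_normed_domains' {E₁ E₂ F : Type*}
    [NormedAddCommGroup E₁] [NormedSpace ℝ E₁]
    [NormedAddCommGroup E₂] [NormedSpace ℝ E₂]
    [AddCommGroup F] [Module ℝ F] [TopologicalSpace F]
    (β : E₁ →ₗ[ℝ] E₂ →ₗ[ℝ] F)
    (hβ : Continuous (fun xy : E₁ × E₂ => β xy.1 xy.2)) :
    ∀ p : ℕ → ℕ → Seminorm ℝ F, (∀ i j, Continuous (p i j)) →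
    ∃ (P : ℕ → Seminorm ℝ E₁) (Q : ℕ → Seminorm ℝ E₂),
      (∀ i, Continuous (P i)) ∧ (∀ j, Continuous (Q j)) ∧
      ∀ (i j : ℕ) (x : E₁) (y : E₂), p i j (β x y) ≤ P i x * Q j y := by
  intro p hp
  choose C hC0 hC using fun i j => bilin_seminorm_bound β hβ (p i j) (hp i j)
  set a : ℕ → ℝ := fun n => 1 + ∑ k ∈ Finset.range (n+1), ∑ l ∈ Finset.range (n+1), C k l
    with ha
  have hsum_nonneg : ∀ n, 0 ≤ ∑ k ∈ Finset.range (n+1), ∑ l ∈ Finset.range (n+1), C k l :=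
    fun n => Finset.sum_nonneg fun k _ => Finset.sum_nonneg fun l _ => hC0 k l
  have ha1 : ∀ n, 1 ≤ a n := fun n => le_add_of_nonneg_right (hsum_nonneg n)
  have ha0 : ∀ n, 0 ≤ a n := fun n => le_trans zero_le_one (ha1 n)
  have hmono : Monotone a := by
    intro m n hmn
    apply add_le_add_right
    calc ∑ k ∈ Finset.range (m+1), ∑ l ∈ Finset.range (m+1), C k l
        ≤ ∑ k ∈ Finset.range (m+1), ∑ l ∈ Finset.range (n+1), C k l :=
          Finset.sum_le_sum fun k _ =>
            Finset.sum_le_sum_of_subset_of_nonneg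
              (Finset.range_subset_range.mpr (by omega)) (fun l _ _ => hC0 k l)
      _ ≤ ∑ k ∈ Finset.range (n+1), ∑ l ∈ Finset.range (n+1), C k l :=
          Finset.sum_le_sum_of_subset_of_nonneg
            (Finset.range_subset_range.mpr (by omega))
            (fun k _ _ => Finset.sum_nonneg fun l _ => hC0 k l)
  have hCa : ∀ i j, C i j ≤ a i * a j := by
    intro i j
    have h1 : C i j ≤ a (max i j) := by
      have hi : i ∈ Finset.range (max i j + 1) := Finset.mem_range.mpr (by omega)
      have hj : j ∈ Finset.range (max i j + 1) := Finset.mem_range.mpr (by omega)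
      have hle : C i j ≤ ∑ l ∈ Finset.range (max i j + 1), C i l :=
        Finset.single_le_sum (fun l _ => hC0 i l) hj
      have hle2 : (∑ l ∈ Finset.range (max i j + 1), C i l) ≤
          ∑ k ∈ Finset.range (max i j + 1), ∑ l ∈ Finset.range (max i j + 1), C k l :=
        Finset.single_le_sum (fun k _ => Finset.sum_nonneg fun l _ => hC0 k l) hi
      have h3 := hle.trans hle2
      show C i j ≤ 1 + ∑ k ∈ Finset.range (max i j + 1), ∑ l ∈ Finset.range (max i j + 1), C k l
      linarith
    have h2 : a (max i j) ≤ a i * a j := by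
      rcases le_total i j with h | h
      · rw [max_eq_right h]
        calc a j = 1 * a j := (one_mul _).symm
          _ ≤ a i * a j := mul_le_mul_of_nonneg_right (ha1 i) (ha0 j)
      · rw [max_eq_left h]
        calc a i = a i * 1 := (mul_one _).symm
          _ ≤ a i * a j := mul_le_mul_of_nonneg_left (ha1 j) (ha0 i)
    exact h1.trans h2
  refine ⟨fun i => (a i).toNNReal • normSeminorm ℝ E₁,
    fun j => (a j).toNNReal • normSeminorm ℝ E₂, ?_, ?_, ?_⟩
  · intro i
    have : ⇑((a i).toNNReal • normSeminorm ℝ E₁) = fun x => a i * ‖x‖ := by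
      ext x
      simp [Seminorm.smul_apply, NNReal.smul_def, Real.coe_toNNReal _ (ha0 i)]
    rw [this]
    exact continuous_const.mul continuous_norm
  · intro j
    have : ⇑((a j).toNNReal • normSeminorm ℝ E₂) = fun y => a j * ‖y‖ := by
      ext y
      simp [Seminorm.smul_apply, NNReal.smul_def, Real.coe_toNNReal _ (ha0 j)]
    rw [this]
    exact continuous_const.mul continuous_norm
  · intro i j x y
    have hv1 : ((a i).toNNReal • normSeminorm ℝ E₁) x = a i * ‖x‖ := by
      simp [Seminorm.smul_apply, NNReal.smul_def, Real.coe_toNNReal _ (ha0 i)]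
    have hv2 : ((a j).toNNReal • normSeminorm ℝ E₂) y = a j * ‖y‖ := by
      simp [Seminorm.smul_apply, NNReal.smul_def, Real.coe_toNNReal _ (ha0 j)]
    rw [hv1, hv2]
    calc p i j (β x y) ≤ C i j * ‖x‖ * ‖y‖ := hC i j x y
      _ ≤ a i * a j * (‖x‖ * ‖y‖) := by
          rw [mul_assoc]
          exact mul_le_mul_of_nonneg_right (hCa i j)
            (mul_nonneg (norm_nonneg x) (norm_nonneg y))
      _ = a i * ‖x‖ * (a j * ‖y‖) := by ring

/-- Every continuous bilinear map from a product of normed spaces into a locally convex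
space admits product estimates. -/
theorem productEstimates_of_normed_domains {E₁ E₂ F : Type*}
    [NormedAddCommGroup E₁] [NormedSpace ℝ E₁]
    [NormedAddCommGroup E₂] [NormedSpace ℝ E₂]
    [AddCommGroup F] [Module ℝ F] [TopologicalSpace F]
    [IsTopologicalAddGroup F] [ContinuousSMul ℝ F] [LocallyConvexSpace ℝ F] [T2Space F]
    (β : E₁ →ₗ[ℝ] E₂ →ₗ[ℝ] F)
    (hβ : Continuous (fun xy : E₁ × E₂ => β xy.1 xy.2)) :
    ProductEstimates (fun x y => β x y) :=
  productEstimates_of_normed_domains' β hβ
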